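/- Let A ∈ M_n(ℂ) and assume that A is not a 2×2 normal matrix. If k(A) = 2, then for every angle φ ∈ ℝ the largest eigenvalue of the Hermitian matrix Re(e^{-iφ}A) has multiplicity 1, i.e., its eigenspace is one-dimensional. -/

import Mathlib

open Matrix Complex

noncomputable section

/-- The Hermitian part `Re A = (A + A*)/2` of a complex matrix. -/
def reM {n : ℕ} (A : Matrix (Fin n) (Fin n) ℂ) : Matrix (Fin n) (Fin n) ℂ :=
  (2⁻¹ : ℂ) • (A + Aᴴ)

/-- The numerical range `W(A) = {⟨Ax, x⟩ : ‖x‖ = 1}` (here `⟨Ax, x⟩ = x* A x`). -/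
def numRange {n : ℕ} (A : Matrix (Fin n) (Fin n) ℂ) : Set ℂ :=
  {z | ∃ x : Fin n → ℂ, star x ⬝ᵥ x = 1 ∧ star x ⬝ᵥ A.mulVec x = z}

/-- The Gau–Wu number `k(A)`: the maximum cardinality of an orthonormal family whose
quadratic-form values all lie on the boundary of `W(A)`. -/
def gauWu {n : ℕ} (A : Matrix (Fin n) (Fin n) ℂ) : ℕ :=
  sSup {k : ℕ | ∃ f : Fin k → (Fin n → ℂ),
    (∀ i j, star (f i) ⬝ᵥ f j = if i = j then (1 : ℂ) else 0) ∧
    ∀ j, star (f j) ⬝ᵥ A.mulVec (f j) ∈ frontier (numRange A)}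

variable {n : ℕ}

/-- star self dot product is real sum of normSq -/
lemma dot_star_self_eq (v : Fin n → ℂ) :
    star v ⬝ᵥ v = ((∑ i, Complex.normSq (v i) : ℝ) : ℂ) := by
  simp [dotProduct, Pi.star_apply, Complex.ofReal_sum,
    Complex.normSq_eq_conj_mul_self]

lemma dot_star_self_nonneg (v : Fin n → ℂ) : 0 ≤ ∑ i, Complex.normSq (v i) :=
  Finset.sum_nonneg fun i _ => Complex.normSq_nonneg _

lemma dot_star_self_pos {v : Fin n → ℂ} (hv : v ≠ 0) :
    0 < ∑ i, Complex.normSq (v i) := by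
  rcases (dot_star_self_nonneg v).lt_or_eq with h | h
  · exact h
  · exfalso
    apply hv
    funext i
    have := Finset.sum_eq_zero_iff_of_nonneg
      (fun j (_ : j ∈ Finset.univ) => Complex.normSq_nonneg (v j)) |>.1 h.symm i (by simp)
    simpa using Complex.normSq_eq_zero.mp this

lemma herm_dot (M : Matrix (Fin n) (Fin n) ℂ) (x y : Fin n → ℂ) :
    star x ⬝ᵥ M *ᵥ y = star (Mᴴ *ᵥ x) ⬝ᵥ y := by
  rw [Matrix.star_mulVec, Matrix.conjTranspose_conjTranspose, Matrix.dotProduct_mulVec]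

/-- Quadratic form of a Hermitian matrix: weights version. -/
lemma quad_form_weights {H : Matrix (Fin n) (Fin n) ℂ} (hH : H.IsHermitian) (x : Fin n → ℂ) :
    ∃ w : Fin n → ℝ, (∀ i, 0 ≤ w i) ∧ star x ⬝ᵥ x = ((∑ i, w i : ℝ) : ℂ) ∧
      star x ⬝ᵥ H *ᵥ x = ((∑ i, hH.eigenvalues i * w i : ℝ) : ℂ) := by
  set U : Matrix (Fin n) (Fin n) ℂ := (hH.eigenvectorUnitary : Matrix (Fin n) (Fin n) ℂ)
  set y : Fin n → ℂ := (star U) *ᵥ x with hy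
  refine ⟨fun i => Complex.normSq (y i), fun i => Complex.normSq_nonneg _, ?_, ?_⟩
  · have h1 : star y ⬝ᵥ y = star x ⬝ᵥ x := by
      rw [hy, Matrix.star_mulVec, Matrix.star_eq_conjTranspose,
        Matrix.conjTranspose_conjTranspose, Matrix.dotProduct_mulVec,
        Matrix.vecMul_vecMul]
      have h1 : U * Uᴴ = 1 := by
        have := Matrix.mem_unitaryGroup_iff.mp hH.eigenvectorUnitary.2
        rwa [Matrix.star_eq_conjTranspose] at this
      rw [h1, Matrix.vecMul_one]
    rw [← h1, dot_star_self_eq]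
  · conv_lhs => rw [hH.spectral_theorem, Unitary.conjStarAlgAut_apply]
    rw [← Matrix.mulVec_mulVec, ← Matrix.mulVec_mulVec, ← hy]
    have h2 : star x ⬝ᵥ U *ᵥ (diagonal (RCLike.ofReal ∘ hH.eigenvalues) *ᵥ y)
        = star y ⬝ᵥ (diagonal (RCLike.ofReal ∘ hH.eigenvalues) *ᵥ y) := by
      rw [hy, Matrix.star_mulVec, Matrix.star_eq_conjTranspose,
        Matrix.conjTranspose_conjTranspose, Matrix.dotProduct_mulVec (star x) U,
        Matrix.dotProduct_mulVec]
    rw [h2]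
    simp only [dotProduct, Matrix.mulVec_diagonal, Pi.star_apply,
      Function.comp_apply]
    rw [Complex.ofReal_sum]
    refine Finset.sum_congr rfl fun i _ => ?_
    have hcast : (RCLike.ofReal (hH.eigenvalues i) : ℂ) = ((hH.eigenvalues i : ℝ) : ℂ) := rfl
    rw [hcast]
    have hring : star (y i) * (((hH.eigenvalues i : ℝ) : ℂ) * y i)
        = ((hH.eigenvalues i : ℝ) : ℂ) * (star (y i) * y i) := by ring
    rw [hring, Complex.star_def, ← Complex.normSq_eq_conj_mul_self]
    push_cast
    ring

/-- Frontier from touching the max of real part. -/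
lemma mem_frontier_of_re_max {S : Set ℂ} {μ : ℝ} {z : ℂ}
    (hS : ∀ w ∈ S, w.re ≤ μ) (hz : z ∈ S) (hre : z.re = μ) : z ∈ frontier S := by
  rw [frontier]
  refine ⟨subset_closure hz, fun hint => ?_⟩
  rw [mem_interior_iff_mem_nhds, Metric.mem_nhds_iff] at hint
  obtain ⟨ε, hε, hball⟩ := hint
  have hmem : z + (ε/2 : ℝ) ∈ S := by
    apply hball
    simp only [Metric.mem_ball, Complex.dist_eq]
    rw [add_sub_cancel_left, Complex.norm_real, Real.norm_eq_abs]
    rw [abs_of_pos (by linarith)]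
    linarith
  have := hS _ hmem
  simp only [Complex.add_re, Complex.ofReal_re, hre] at this
  linarith

lemma mem_frontier_of_re_min {S : Set ℂ} {μ : ℝ} {z : ℂ}
    (hS : ∀ w ∈ S, μ ≤ w.re) (hz : z ∈ S) (hre : z.re = μ) : z ∈ frontier S := by
  rw [frontier]
  refine ⟨subset_closure hz, fun hint => ?_⟩
  rw [mem_interior_iff_mem_nhds, Metric.mem_nhds_iff] at hint
  obtain ⟨ε, hε, hball⟩ := hint
  have hmem : z - (ε/2 : ℝ) ∈ S := by
    apply hball
    simp only [Metric.mem_ball, Complex.dist_eq]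
    rw [sub_sub_cancel_left, norm_neg, Complex.norm_real, Real.norm_eq_abs]
    rw [abs_of_pos (by linarith)]
    linarith
  have := hS _ hmem
  simp only [Complex.sub_re, Complex.ofReal_re, hre] at this
  linarith

/-- Eigenvectors of a Hermitian matrix for distinct real eigenvalues are orthogonal. -/
lemma orth_of_distinct_eig {H : Matrix (Fin n) (Fin n) ℂ} (hH : H.IsHermitian)
    {x y : Fin n → ℂ} {a b : ℝ}
    (hx : H *ᵥ x = (a : ℂ) • x) (hy : H *ᵥ y = (b : ℂ) • y) (hab : a ≠ b) :
    star x ⬝ᵥ y = 0 := by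
  have h1 : star x ⬝ᵥ H *ᵥ y = (b : ℂ) * (star x ⬝ᵥ y) := by
    rw [hy, dotProduct_smul, smul_eq_mul]
  have h2 : star x ⬝ᵥ H *ᵥ y = (a : ℂ) * (star x ⬝ᵥ y) := by
    rw [herm_dot, hH.eq, hx, star_smul, smul_dotProduct, smul_eq_mul,
      Complex.star_def, Complex.conj_ofReal]
  have h3 : ((a : ℂ) - b) * (star x ⬝ᵥ y) = 0 := by rw [sub_mul, h2.symm.trans h1]; ring
  rcases mul_eq_zero.mp h3 with h | h
  · exfalso; apply hab
    have := sub_eq_zero.mp h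
    exact_mod_cast this
  · exact h

lemma reM_isHermitian (B : Matrix (Fin n) (Fin n) ℂ) : (reM B).IsHermitian := by
  unfold Matrix.IsHermitian reM
  rw [Matrix.conjTranspose_smul, Matrix.conjTranspose_add, Matrix.conjTranspose_conjTranspose]
  rw [add_comm]
  congr 1
  simp [Complex.star_def]

lemma re_dot (B : Matrix (Fin n) (Fin n) ℂ) (x : Fin n → ℂ) :
    star x ⬝ᵥ (reM B) *ᵥ x = (((star x ⬝ᵥ B *ᵥ x).re : ℝ) : ℂ) := by
  have hconj : star x ⬝ᵥ Bᴴ *ᵥ x = star (star x ⬝ᵥ B *ᵥ x) := by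
    rw [herm_dot, Matrix.conjTranspose_conjTranspose, Matrix.star_dotProduct]
  rw [reM, Matrix.smul_mulVec, dotProduct_smul, Matrix.add_mulVec,
    dotProduct_add, hconj, smul_eq_mul]
  set z := star x ⬝ᵥ B *ᵥ x
  rw [Complex.star_def, Complex.add_conj]
  rw [Complex.ofReal_mul]  -- maybe not needed
  ring_nf
  simp [Complex.ofReal_mul]
  ring

/-- the set in the definition of gauWu -/
def gwSet (A : Matrix (Fin n) (Fin n) ℂ) : Set ℕ :=
  {k : ℕ | ∃ f : Fin k → (Fin n → ℂ),
    (∀ i j, star (f i) ⬝ᵥ f j = if i = j then (1 : ℂ) else 0) ∧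
    ∀ j, star (f j) ⬝ᵥ A.mulVec (f j) ∈ frontier (numRange A)}

lemma gauWu_eq_sSup (A : Matrix (Fin n) (Fin n) ℂ) : gauWu A = sSup (gwSet A) := rfl

lemma gwSet_le {A : Matrix (Fin n) (Fin n) ℂ} {k : ℕ} (hk : k ∈ gwSet A) : k ≤ n := by
  obtain ⟨f, horth, -⟩ := hk
  have hli : LinearIndependent ℂ f := by
    rw [Fintype.linearIndependent_iff]
    intro g hg i
    have hdsum : star (f i) ⬝ᵥ (∑ j, g j • f j) = ∑ j, g j * (star (f i) ⬝ᵥ f j) := by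
      simp only [dotProduct, Finset.sum_apply, Pi.smul_apply, smul_eq_mul,
        Finset.mul_sum]
      rw [Finset.sum_comm]
      refine Finset.sum_congr rfl fun j _ => Finset.sum_congr rfl fun l _ => by ring
    have h0 := congrArg (fun v => star (f i) ⬝ᵥ v) hg
    simp only [dotProduct_zero] at h0
    rw [hdsum] at h0
    simp only [horth] at h0
    rw [Finset.sum_eq_single i (fun j _ hj => by rw [if_neg (fun h => hj h.symm), mul_zero])
      (by simp)] at h0
    simpa using h0
  have := hli.fintype_card_le_finrank
  simpa [Module.finrank_fin_fun] using this

lemma zero_mem_gwSet (A : Matrix (Fin n) (Fin n) ℂ) : 0 ∈ gwSet A :=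
  ⟨fun i => i.elim0, fun i => i.elim0, fun j => j.elim0⟩

lemma bddAbove_gwSet (A : Matrix (Fin n) (Fin n) ℂ) : BddAbove (gwSet A) :=
  ⟨n, fun _ hk => gwSet_le hk⟩

lemma hasEigenvalue_toLin'_of {H : Matrix (Fin n) (Fin n) ℂ} {v : Fin n → ℂ} (hv : v ≠ 0)
    {μ : ℂ} (h : H *ᵥ v = μ • v) : Module.End.HasEigenvalue (Matrix.toLin' H) μ :=
  Module.End.hasEigenvalue_of_hasEigenvector
    ⟨Module.End.mem_eigenspace_iff.2 (by rw [Matrix.toLin'_apply, h]), hv⟩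

lemma mem_eigenspace_toLin'_iff {H : Matrix (Fin n) (Fin n) ℂ} {x : Fin n → ℂ} {μ : ℂ} :
    x ∈ Module.End.eigenspace (Matrix.toLin' H) μ ↔ H *ᵥ x = μ • x := by
  rw [Module.End.mem_eigenspace_iff, Matrix.toLin'_apply]

lemma exists_unit_smul {w : Fin n → ℂ} (hw : w ≠ 0) :
    ∃ c : ℝ, 0 < c ∧ star ((c:ℂ) • w) ⬝ᵥ ((c:ℂ) • w) = 1 := by
  have hS := dot_star_self_pos hw
  set S := ∑ i, Complex.normSq (w i)
  refine ⟨(Real.sqrt S)⁻¹, by positivity, ?_⟩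
  rw [star_smul, smul_dotProduct, dotProduct_smul, dot_star_self_eq]
  simp only [smul_eq_mul, Complex.star_def, Complex.conj_ofReal]
  rw [← Complex.ofReal_mul, ← Complex.ofReal_mul]
  norm_cast
  rw [show (∑ i, Complex.normSq (w i)) = S from rfl, ← mul_assoc, ← mul_inv,
    Real.mul_self_sqrt hS.le, inv_mul_cancel₀ hS.ne']

lemma exists_orthonormal_pair {E : Submodule ℂ (Fin n → ℂ)} (h2 : 2 ≤ Module.finrank ℂ E) :
    ∃ u v : Fin n → ℂ, u ∈ E ∧ v ∈ E ∧ star u ⬝ᵥ u = 1 ∧ star v ⬝ᵥ v = 1 ∧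
      star u ⬝ᵥ v = 0 ∧ star v ⬝ᵥ u = 0 := by
  have hEbot : E ≠ ⊥ := by
    intro h
    rw [h] at h2
    simp at h2
  obtain ⟨u0, hu0E, hu0⟩ := Submodule.exists_mem_ne_zero_of_ne_bot hEbot
  have hv0 : ∃ v0 ∈ E, v0 ∉ Submodule.span ℂ {u0} := by
    by_contra hcon
    push_neg at hcon
    have hle : E ≤ Submodule.span ℂ {u0} := fun x hx => hcon x hx
    have := Submodule.finrank_mono hle
    rw [finrank_span_singleton hu0] at this
    omega
  obtain ⟨v0, hv0E, hv0span⟩ := hv0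
  have hs : star u0 ⬝ᵥ u0 ≠ 0 := by
    rw [dot_star_self_eq]
    exact_mod_cast (dot_star_self_pos hu0).ne'
  set c : ℂ := (star u0 ⬝ᵥ v0) / (star u0 ⬝ᵥ u0) with hc
  set w : Fin n → ℂ := v0 - c • u0 with hwdef
  have hwE : w ∈ E := E.sub_mem hv0E (E.smul_mem c hu0E)
  have hw : w ≠ 0 := by
    intro h
    apply hv0span
    have : v0 = c • u0 := by rwa [hwdef, sub_eq_zero] at h
    rw [this]
    exact Submodule.smul_mem _ _ (Submodule.mem_span_singleton_self u0)
  have horth : star u0 ⬝ᵥ w = 0 := by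
    rw [hwdef, dotProduct_sub, dotProduct_smul, smul_eq_mul, hc,
      div_mul_cancel₀ _ hs, sub_self]
  obtain ⟨c1, hc1, hu1⟩ := exists_unit_smul hu0
  obtain ⟨c2, hc2, hv1⟩ := exists_unit_smul hw
  refine ⟨(c1:ℂ) • u0, (c2:ℂ) • w, E.smul_mem _ hu0E, E.smul_mem _ hwE, hu1, hv1, ?_, ?_⟩
  · rw [star_smul, smul_dotProduct, dotProduct_smul, horth]
    simp
  · rw [Matrix.star_dotProduct, star_smul, smul_dotProduct, dotProduct_smul,
      horth]
    simp

-- KEY LEMMA (appended to helpers when testing)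
lemma key (B : Matrix (Fin n) (Fin n) ℂ)
    (hB : ¬ (n = 2 ∧ B * Bᴴ = Bᴴ * B)) (hk : gauWu B = 2) (μ : ℝ)
    (hev : Module.End.HasEigenvalue (Matrix.toLin' (reM B)) (μ:ℂ))
    (hmax : ∀ ν : ℝ, Module.End.HasEigenvalue (Matrix.toLin' (reM B)) (ν:ℂ) → ν ≤ μ) :
    Module.finrank ℂ (Module.End.eigenspace (Matrix.toLin' (reM B)) (μ:ℂ)) = 1 := by
  set H := reM B with hHdef
  have hH : H.IsHermitian := reM_isHermitian B
  set E := Module.End.eigenspace (Matrix.toLin' H) (μ:ℂ) with hEdef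
  -- 2 is attained, 3 is not
  have h2mem : 2 ∈ gwSet B := by
    have := Nat.sSup_mem ⟨0, zero_mem_gwSet B⟩ (bddAbove_gwSet B)
    rwa [← gauWu_eq_sSup, hk] at this
  have hn2 : 2 ≤ n := gwSet_le h2mem
  have not3 : 3 ∉ gwSet B := by
    intro h3
    have := le_csSup (bddAbove_gwSet B) h3
    rw [← gauWu_eq_sSup, hk] at this
    omega
  -- each eigenvalue of H is ≤ μ
  have hvec : ∀ i, H *ᵥ ⇑(hH.eigenvectorBasis i) =
      ((hH.eigenvalues i : ℝ) : ℂ) • ⇑(hH.eigenvectorBasis i) := by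
    intro i
    rw [hH.mulVec_eigenvectorBasis i]
    funext j
    simp [Complex.real_smul]
  have hvne : ∀ i, (⇑(hH.eigenvectorBasis i) : Fin n → ℂ) ≠ 0 := by
    intro i h
    apply hH.eigenvectorBasis.orthonormal.ne_zero i
    ext j
    exact congrFun h j
  have hle : ∀ i, hH.eigenvalues i ≤ μ := fun i =>
    hmax _ (hasEigenvalue_toLin'_of (hvne i) (hvec i))
  -- real part of quadratic form
  have hq : ∀ x : Fin n → ℂ, star x ⬝ᵥ x = 1 → ∃ w : Fin n → ℝ,
      (∀ i, 0 ≤ w i) ∧ (∑ i, w i) = 1 ∧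
      (star x ⬝ᵥ B *ᵥ x).re = ∑ i, hH.eigenvalues i * w i := by
    intro x hx
    obtain ⟨w, hw0, hw1, hw2⟩ := quad_form_weights hH x
    refine ⟨w, hw0, ?_, ?_⟩
    · rw [hx] at hw1
      exact_mod_cast hw1.symm
    · rw [re_dot] at hw2
      exact_mod_cast hw2
  have hub : ∀ z ∈ numRange B, z.re ≤ μ := by
    rintro z ⟨x, hx1, rfl⟩
    obtain ⟨w, hw0, hw1, hw2⟩ := hq x hx1
    rw [hw2]
    calc ∑ i, hH.eigenvalues i * w i ≤ ∑ i, μ * w i :=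
          Finset.sum_le_sum fun i _ => mul_le_mul_of_nonneg_right (hle i) (hw0 i)
      _ = μ := by rw [← Finset.mul_sum, hw1, mul_one]
  -- lower bound: 1 ≤ finrank
  refine le_antisymm ?_ ?_
  · -- finrank ≤ 1
    by_contra hgt
    push_neg at hgt
    have h2E : 2 ≤ Module.finrank ℂ E := hgt
    obtain ⟨u, v, huE, hvE, huu, hvv, huv, hvu⟩ := exists_orthonormal_pair h2E
    have hHu : H *ᵥ u = (μ:ℂ) • u := mem_eigenspace_toLin'_iff.mp huE
    have hHv : H *ᵥ v = (μ:ℂ) • v := mem_eigenspace_toLin'_iff.mp hvE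
    have hval : ∀ x : Fin n → ℂ, star x ⬝ᵥ x = 1 → H *ᵥ x = (μ:ℂ) • x →
        (star x ⬝ᵥ B *ᵥ x).re = μ := by
      intro x hx1 hx2
      have h5 : star x ⬝ᵥ H *ᵥ x = (μ:ℂ) := by
        rw [hx2, dotProduct_smul, hx1, smul_eq_mul, mul_one]
      rw [re_dot] at h5
      exact_mod_cast h5
    by_cases hall : ∀ i, hH.eigenvalues i = μ
    · -- all eigenvalues equal μ
      have hallre : ∀ x : Fin n → ℂ, star x ⬝ᵥ x = 1 →
          (star x ⬝ᵥ B *ᵥ x).re = μ := by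
        intro x hx
        obtain ⟨w, hw0, hw1, hw2⟩ := hq x hx
        rw [hw2]
        have : ∀ i ∈ Finset.univ, hH.eigenvalues i * w i = μ * w i := fun i _ => by
          rw [hall i]
        rw [Finset.sum_congr rfl this, ← Finset.mul_sum, hw1, mul_one]
      rcases lt_or_ge n 3 with hn3 | hn3
      · -- n = 2 : B is normal, contradiction with hB
        have hn : n = 2 := by omega
        apply hB
        refine ⟨hn, ?_⟩
        have hHone : H = (μ:ℂ) • (1 : Matrix (Fin n) (Fin n) ℂ) := by
          have hdiag : Matrix.diagonal (RCLike.ofReal ∘ hH.eigenvalues) =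
              (μ:ℂ) • (1 : Matrix (Fin n) (Fin n) ℂ) := by
            ext i j
            by_cases h : i = j
            · subst h
              simp only [Matrix.diagonal_apply_eq, Function.comp_apply, hall i,
                Matrix.smul_apply, Matrix.one_apply_eq, smul_eq_mul, mul_one]
              rfl
            · simp [Matrix.diagonal_apply_ne _ h, Matrix.one_apply_ne h]
          have hsp := hH.spectral_theorem
          rw [hdiag] at hsp
          rw [hsp, Unitary.conjStarAlgAut_apply, Matrix.mul_smul, Matrix.mul_one, Matrix.smul_mul]
          congr 1
          have := Matrix.mem_unitaryGroup_iff.mp hH.eigenvectorUnitary.2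
          rwa [Matrix.star_eq_conjTranspose] at this
        have hsum : B + Bᴴ = ((2:ℂ) * (μ:ℂ)) • (1 : Matrix (Fin n) (Fin n) ℂ) := by
          have h6 : (2:ℂ) • ((2⁻¹:ℂ) • (B + Bᴴ)) =
              (2:ℂ) • ((μ:ℂ) • (1 : Matrix (Fin n) (Fin n) ℂ)) := by
            rw [← reM, ← hHdef, hHone]
          rwa [smul_smul, smul_smul, show (2:ℂ) * 2⁻¹ = 1 by norm_num, one_smul] at h6
        have hBH : Bᴴ = ((2:ℂ) * (μ:ℂ)) • (1 : Matrix (Fin n) (Fin n) ℂ) - B := by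
          rw [← hsum]; abel
        rw [hBH, Matrix.mul_sub, Matrix.sub_mul, Matrix.mul_smul, Matrix.smul_mul,
          Matrix.mul_one, Matrix.one_mul]
      · -- n ≥ 3 : three standard basis vectors are on the boundary
        apply not3
        have hsingle : ∀ (a b : Fin n),
            star (Pi.single a (1:ℂ)) ⬝ᵥ Pi.single b (1:ℂ) =
              if a = b then (1:ℂ) else 0 := by
          intro a b
          rw [dotProduct_single, mul_one, Pi.star_apply, Pi.single_apply]
          by_cases h : a = b
          · subst h; simp
          · rw [if_neg (fun hh => h hh.symm), if_neg h, star_zero]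
        refine ⟨fun k => Pi.single (Fin.castLE hn3 k) 1, ?_, ?_⟩
        · intro i j
          rw [hsingle]
          by_cases h : i = j
          · simp [h]
          · rw [if_neg (fun hh => h (Fin.castLE_injective hn3 hh)), if_neg h]
        · intro j
          have hxx : star (Pi.single (Fin.castLE hn3 j) (1:ℂ)) ⬝ᵥ
              Pi.single (Fin.castLE hn3 j) (1:ℂ) = 1 := by rw [hsingle, if_pos rfl]
          exact mem_frontier_of_re_max hub ⟨_, hxx, rfl⟩ (hallre _ hxx)
    · -- some eigenvalue is < μ
      push_neg at hall
      obtain ⟨i0, hi0⟩ := hall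
      obtain ⟨j0, -, hj0⟩ := Finset.exists_min_image Finset.univ hH.eigenvalues
        ⟨⟨0, by omega⟩, Finset.mem_univ _⟩
      set ν := hH.eigenvalues j0 with hνdef
      have hνμ : ν < μ := lt_of_le_of_lt (hj0 i0 (Finset.mem_univ _))
        (lt_of_le_of_ne (hle i0) hi0)
      have hlb : ∀ z ∈ numRange B, ν ≤ z.re := by
        rintro z ⟨x, hx1, rfl⟩
        obtain ⟨w, hw0, hw1, hw2⟩ := hq x hx1
        rw [hw2]
        calc ν = ∑ i, ν * w i := by rw [← Finset.mul_sum, hw1, mul_one]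
          _ ≤ ∑ i, hH.eigenvalues i * w i := Finset.sum_le_sum fun i _ =>
              mul_le_mul_of_nonneg_right (hj0 i (Finset.mem_univ _)) (hw0 i)
      obtain ⟨c3, hc3, hx3unit⟩ := exists_unit_smul (hvne j0)
      set x3 : Fin n → ℂ := (c3:ℂ) • ⇑(hH.eigenvectorBasis j0) with hx3def
      have hHx3 : H *ᵥ x3 = (ν:ℂ) • x3 := by
        rw [hx3def, Matrix.mulVec_smul, hvec j0, smul_comm]
      have hux3 : star u ⬝ᵥ x3 = 0 := orth_of_distinct_eig hH hHu hHx3 hνμ.ne'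
      have hvx3 : star v ⬝ᵥ x3 = 0 := orth_of_distinct_eig hH hHv hHx3 hνμ.ne'
      have hx3u : star x3 ⬝ᵥ u = 0 := by
        rw [Matrix.star_dotProduct, hux3, star_zero]
      have hx3v : star x3 ⬝ᵥ v = 0 := by
        rw [Matrix.star_dotProduct, hvx3, star_zero]
      have hx3re : (star x3 ⬝ᵥ B *ᵥ x3).re = ν := by
        have h5 : star x3 ⬝ᵥ H *ᵥ x3 = (ν:ℂ) := by
          rw [hHx3, dotProduct_smul, hx3unit, smul_eq_mul, mul_one]
        rw [re_dot] at h5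
        exact_mod_cast h5
      apply not3
      refine ⟨![u, v, x3], ?_, ?_⟩
      · intro i j
        fin_cases i <;> fin_cases j <;>
          simp [huu, hvv, huv, hvu, hux3, hvx3, hx3u, hx3v, hx3unit]
      · intro j
        fin_cases j
        · exact mem_frontier_of_re_max hub ⟨u, huu, rfl⟩ (hval u huu hHu)
        · exact mem_frontier_of_re_max hub ⟨v, hvv, rfl⟩ (hval v hvv hHv)
        · exact mem_frontier_of_re_min hlb ⟨x3, hx3unit, rfl⟩ hx3re
  · -- 1 ≤ finrank
    obtain ⟨v0, hv0⟩ := hev.exists_hasEigenvector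
    rw [Nat.one_le_iff_ne_zero]
    intro h0
    have hEbot : E = ⊥ := Submodule.finrank_eq_zero.mp h0
    exact hv0.2 ((Submodule.mem_bot ℂ).mp (hEbot ▸ hv0.1))


lemma numRange_smul (c : ℂ) (A : Matrix (Fin n) (Fin n) ℂ) :
    numRange (c • A) = (fun z => c * z) '' numRange A := by
  ext z
  constructor
  · rintro ⟨x, h1, h2⟩
    exact ⟨star x ⬝ᵥ A *ᵥ x, ⟨x, h1, rfl⟩, by
      rw [← h2, Matrix.smul_mulVec, dotProduct_smul, smul_eq_mul]⟩
  · rintro ⟨w, ⟨x, h1, h2⟩, rfl⟩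
    exact ⟨x, h1, by rw [Matrix.smul_mulVec, dotProduct_smul, smul_eq_mul, h2]⟩

lemma frontier_numRange_smul {c : ℂ} (hc : c ≠ 0) (A : Matrix (Fin n) (Fin n) ℂ) :
    frontier (numRange (c • A)) = (fun z => c * z) '' frontier (numRange A) := by
  rw [numRange_smul]
  have h := (Homeomorph.mulLeft₀ c hc).image_frontier (numRange A)
  rw [Homeomorph.coe_mulLeft₀] at h
  exact h.symm

lemma gwSet_smul {c : ℂ} (hc : c ≠ 0) (A : Matrix (Fin n) (Fin n) ℂ) :
    gwSet (c • A) = gwSet A := by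
  have hmem : ∀ (x : Fin n → ℂ),
      (star x ⬝ᵥ (c • A) *ᵥ x ∈ frontier (numRange (c • A)) ↔
        star x ⬝ᵥ A *ᵥ x ∈ frontier (numRange A)) := by
    intro x
    rw [frontier_numRange_smul hc, Matrix.smul_mulVec, dotProduct_smul,
      smul_eq_mul]
    constructor
    · rintro ⟨w, hw, hcw⟩
      rwa [mul_left_cancel₀ hc hcw] at hw
    · intro h
      exact ⟨_, h, rfl⟩
  ext k
  exact ⟨fun ⟨f, h1, h2⟩ => ⟨f, h1, fun j => (hmem (f j)).1 (h2 j)⟩,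
    fun ⟨f, h1, h2⟩ => ⟨f, h1, fun j => (hmem (f j)).2 (h2 j)⟩⟩


/-- If `A` is not a 2×2 normal matrix and `k(A) = 2`, then for every angle `φ` the largest
eigenvalue of the Hermitian matrix `Re(e^{-iφ}A)` has multiplicity 1. -/
theorem max_eigenvalue_simple_of_gauWu_eq_two {n : ℕ} (A : Matrix (Fin n) (Fin n) ℂ)
    (hA : ¬ (n = 2 ∧ A * Aᴴ = Aᴴ * A))
    (hk : gauWu A = 2) :
    ∀ φ : ℝ, ∀ μ : ℝ,
      Module.End.HasEigenvalue
        (Matrix.toLin' (reM (Complex.exp (-(φ : ℂ) * Complex.I) • A))) (μ : ℂ) →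
      (∀ ν : ℝ,
        Module.End.HasEigenvalue
          (Matrix.toLin' (reM (Complex.exp (-(φ : ℂ) * Complex.I) • A))) (ν : ℂ) → ν ≤ μ) →
      Module.finrank ℂ
        (Module.End.eigenspace
          (Matrix.toLin' (reM (Complex.exp (-(φ : ℂ) * Complex.I) • A))) (μ : ℂ)) = 1 := by
  intro φ μ hev hmax
  set c : ℂ := Complex.exp (-(φ : ℂ) * Complex.I) with hcdef
  have hc : c ≠ 0 := Complex.exp_ne_zero _
  refine key (c • A) ?_ ?_ μ hev hmax
  · rintro ⟨hn, hnormal⟩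
    apply hA
    refine ⟨hn, ?_⟩
    have h1 : (c • A) * (c • A)ᴴ = (c * star c) • (A * Aᴴ) := by
      rw [Matrix.conjTranspose_smul, Matrix.smul_mul, Matrix.mul_smul, smul_smul]
    have h2 : (c • A)ᴴ * (c • A) = (c * star c) • (Aᴴ * A) := by
      rw [Matrix.conjTranspose_smul, Matrix.smul_mul, Matrix.mul_smul, smul_smul,
        mul_comm (star c) c]
    rw [h1, h2] at hnormal
    exact smul_right_injective _ (mul_ne_zero hc (star_ne_zero.2 hc)) hnormal
  · rw [gauWu_eq_sSup, gwSet_smul hc, ← gauWu_eq_sSup, hk]
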